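/- The Čech–Stone remainder H* of the half-line admits a fixed-point free autohomeomorphism, namely the map f* induced by the translation x ↦ x+1 on H = [0,∞). -/

import Mathlib

open Set

/-- The half-line `H = [0,∞)`. -/
abbrev Hplus : Type := {x : ℝ // 0 ≤ x}

/-- The translation `x ↦ x + 1` on the half-line. -/
def shiftMap : Hplus → Hplus := fun x => ⟨(x : ℝ) + 1, by have := x.2; linarith⟩

lemma shiftMap_continuous : Continuous shiftMap :=
  (continuous_subtype_val.add continuous_const).subtype_mk _

/-- The Čech–Stone extension `βf : βH → βH` of the translation `f(x) = x + 1`. -/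
noncomputable def betaShift : StoneCech Hplus → StoneCech Hplus :=
  stoneCechExtend (continuous_stoneCechUnit.comp shiftMap_continuous)

/-- The Čech–Stone remainder `H* = βH \ H`. -/
def HplusStar : Set (StoneCech Hplus) :=
  (Set.range (stoneCechUnit : Hplus → StoneCech Hplus))ᶜ

noncomputable section

def backMap : Hplus → Hplus := fun x => ⟨max ((x : ℝ) - 1) 0, le_max_right _ _⟩

lemma backMap_continuous : Continuous backMap :=
  ((continuous_subtype_val.sub continuous_const).max continuous_const).subtype_mk _

def betaBack : StoneCech Hplus → StoneCech Hplus :=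
  stoneCechExtend (continuous_stoneCechUnit.comp backMap_continuous)

lemma betaShift_unit (x : Hplus) : betaShift (stoneCechUnit x) = stoneCechUnit (shiftMap x) :=
  congrFun (stoneCechExtend_extends (continuous_stoneCechUnit.comp shiftMap_continuous)) x

lemma betaBack_unit (x : Hplus) : betaBack (stoneCechUnit x) = stoneCechUnit (backMap x) :=
  congrFun (stoneCechExtend_extends (continuous_stoneCechUnit.comp backMap_continuous)) x

lemma back_shift (x : Hplus) : backMap (shiftMap x) = x := by
  apply Subtype.ext
  simp only [backMap, shiftMap, add_sub_cancel_right]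
  exact max_eq_left x.2

lemma betaBack_betaShift : betaBack ∘ betaShift = id := by
  apply stoneCech_hom_ext
    ((continuous_stoneCechExtend _).comp (continuous_stoneCechExtend _)) continuous_id
  funext x
  show betaBack (betaShift (stoneCechUnit x)) = stoneCechUnit x
  rw [betaShift_unit, betaBack_unit, back_shift]

lemma betaShift_betaBack_on :
    EqOn (betaShift ∘ betaBack) id
      (closure (stoneCechUnit '' {x : Hplus | 1 ≤ (x : ℝ)})) := by
  apply Set.EqOn.closure _ ((continuous_stoneCechExtend _).comp (continuous_stoneCechExtend _))
    continuous_id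
  rintro _ ⟨x, hx, rfl⟩
  show betaShift (betaBack (stoneCechUnit x)) = stoneCechUnit x
  rw [betaBack_unit, betaShift_unit]
  congr 1
  apply Subtype.ext
  simp only [shiftMap, backMap]
  rw [max_eq_left (by simpa using hx : (0:ℝ) ≤ (x:ℝ) - 1)]
  ring

lemma star_subset_closure :
    HplusStar ⊆ closure (stoneCechUnit '' {x : Hplus | 1 ≤ (x : ℝ)}) := by
  intro p hp
  have hclosed : IsClosed (stoneCechUnit '' {x : Hplus | (x : ℝ) ≤ 1}) := by
    apply IsCompact.isClosed
    apply IsCompact.image _ continuous_stoneCechUnit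
    have : IsCompact ((Subtype.val : Hplus → ℝ) ⁻¹' Icc 0 1) :=
      (Topology.IsClosedEmbedding.subtypeVal isClosed_Ici).isCompact_preimage isCompact_Icc
    convert this using 1
    ext x
    simp [x.2]
  have huniv : (univ : Set (StoneCech Hplus)) =
      closure (stoneCechUnit '' {x : Hplus | (x : ℝ) ≤ 1}) ∪
      closure (stoneCechUnit '' {x : Hplus | 1 ≤ (x : ℝ)}) := by
    rw [← closure_union, ← image_union]
    have : {x : Hplus | (x : ℝ) ≤ 1} ∪ {x : Hplus | 1 ≤ (x : ℝ)} = univ := by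
      ext x; simp [le_total]
    rw [this, image_univ]
    exact (denseRange_stoneCechUnit.closure_range).symm
  have := mem_univ p
  rw [huniv] at this
  rcases this with h | h
  · exact absurd (hclosed.closure_eq ▸ h : p ∈ stoneCechUnit '' _)
      (fun ⟨x, _, hx⟩ => hp ⟨x, hx⟩)
  · exact h

lemma betaShift_mem_star {p : StoneCech Hplus} (hp : p ∈ HplusStar) :
    betaShift p ∈ HplusStar := by
  rintro ⟨y, hy⟩
  apply hp
  refine ⟨backMap y, ?_⟩
  rw [← betaBack_unit, hy]
  exact congrFun betaBack_betaShift p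

lemma betaBack_mem_star {p : StoneCech Hplus} (hp : p ∈ HplusStar) :
    betaBack p ∈ HplusStar := by
  rintro ⟨y, hy⟩
  apply hp
  refine ⟨shiftMap y, ?_⟩
  rw [← betaShift_unit, hy]
  exact betaShift_betaBack_on (star_subset_closure hp)

def starHomeo : HplusStar ≃ₜ HplusStar where
  toFun := fun p => ⟨betaShift p, betaShift_mem_star p.2⟩
  invFun := fun p => ⟨betaBack p, betaBack_mem_star p.2⟩
  left_inv := fun p => Subtype.ext (congrFun betaBack_betaShift p)
  right_inv := fun p => Subtype.ext (betaShift_betaBack_on (star_subset_closure p.2))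
  continuous_toFun :=
    ((continuous_stoneCechExtend _).comp continuous_subtype_val).subtype_mk _
  continuous_invFun :=
    ((continuous_stoneCechExtend _).comp continuous_subtype_val).subtype_mk _

/-- Periodic family of closed intervals `[c+3n, c+3n+w]`, `n : ℕ`. -/
def P (c w : ℝ) : Set Hplus := {x | ∃ n : ℕ, c + 3 * n ≤ (x : ℝ) ∧ (x : ℝ) ≤ c + 3 * n + w}

/-- Open version with width 1/2. -/
def Uo (c : ℝ) : Set Hplus := {x | ∃ n : ℕ, c + 3 * n < (x : ℝ) ∧ (x : ℝ) < c + 3 * n + 1 / 2}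

lemma isOpen_Uo (c : ℝ) : IsOpen (Uo c) := by
  have : Uo c = ⋃ n : ℕ, (Subtype.val ⁻¹' Ioo (c + 3 * n) (c + 3 * n + 1 / 2)) := by
    ext x; simp [Uo, mem_iUnion]
  rw [this]
  exact isOpen_iUnion fun n => (isOpen_Ioo).preimage continuous_subtype_val

lemma Uo_subset_P (c : ℝ) : Uo c ⊆ P c (1 / 2) :=
  fun x ⟨n, h1, h2⟩ => ⟨n, h1.le, h2.le⟩

lemma isClosed_P {c w : ℝ} (hc : 0 ≤ c) (hw : w < 3) : IsClosed (P c w) := by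
  rw [← isOpen_compl_iff]
  have : (P c w)ᶜ = (Subtype.val ⁻¹' Iio c) ∪
      ⋃ n : ℕ, (Subtype.val ⁻¹' Ioo (c + 3 * n + w) (c + 3 * n + 3)) := by
    ext x
    simp only [mem_compl_iff, P, mem_setOf_eq, mem_union, mem_preimage, mem_Iio, mem_iUnion,
      mem_Ioo]
    constructor
    · intro h
      by_cases hxc : (x : ℝ) < c
      · exact Or.inl hxc
      · push_neg at hxc
        right
        refine ⟨⌊((x : ℝ) - c) / 3⌋₊, ?_, ?_⟩
        · have hfl : (⌊((x : ℝ) - c) / 3⌋₊ : ℝ) ≤ ((x : ℝ) - c) / 3 :=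
            Nat.floor_le (div_nonneg (by linarith) (by norm_num))
          by_contra hle
          push_neg at hle
          exact h ⟨⌊((x : ℝ) - c) / 3⌋₊, by linarith, hle⟩
        · have := Nat.lt_floor_add_one (((x : ℝ) - c) / 3)
          linarith
    · rintro (h | ⟨n, h1, h2⟩) ⟨m, hm1, hm2⟩
      · have : (0:ℝ) ≤ 3 * m := by positivity
        linarith
      · have hmn : m ≤ n := by
          by_contra hgt
          push_neg at hgt
          have : (n : ℝ) + 1 ≤ m := by exact_mod_cast hgt
          linarith
        have : (m : ℝ) ≤ n := by exact_mod_cast hmn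
        linarith
  rw [this]
  exact ((isOpen_Iio).preimage continuous_subtype_val).union
    (isOpen_iUnion fun n => (isOpen_Ioo).preimage continuous_subtype_val)

lemma P_disjoint {c w c' w' : ℝ} (h0 : c ≤ c') (h1 : c + w < c') (h2 : c' + w' < c + 3) :
    Disjoint (P c w) (P c' w') := by
  rw [Set.disjoint_left]
  rintro x ⟨n, hn1, hn2⟩ ⟨m, hm1, hm2⟩
  rcases le_or_gt n m with h | h
  · have : (n : ℝ) ≤ m := by exact_mod_cast h
    linarith
  · have : (m : ℝ) + 1 ≤ n := by exact_mod_cast h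
    linarith

lemma shift_P {c w : ℝ} {x : Hplus} (hx : x ∈ P c w) : shiftMap x ∈ P (c + 1) w := by
  obtain ⟨n, h1, h2⟩ := hx
  exact ⟨n, by simp only [shiftMap]; constructor <;> linarith⟩

lemma P_cover (x : Hplus) : x ∈ P 0 1 ∪ P 1 1 ∪ P 2 1 := by
  set k := ⌊(x : ℝ)⌋₊ with hk
  have hk1 : (k : ℝ) ≤ (x : ℝ) := Nat.floor_le x.2
  have hk2 : (x : ℝ) ≤ (k : ℝ) + 1 := (Nat.lt_floor_add_one _).le
  have hdiv : k = 3 * (k / 3) + k % 3 := (Nat.div_add_mod k 3).symm ▸ by omega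
  have hmem : ∀ i : ℕ, k % 3 = i → x ∈ P i 1 := by
    intro i hi
    refine ⟨k / 3, ?_, ?_⟩
    · have : (k : ℝ) = 3 * (k / 3 : ℕ) + i := by exact_mod_cast hdiv.trans (by rw [hi])
      linarith
    · have : (k : ℝ) = 3 * (k / 3 : ℕ) + i := by exact_mod_cast hdiv.trans (by rw [hi])
      linarith
  have h3 : k % 3 = 0 ∨ k % 3 = 1 ∨ k % 3 = 2 := by omega
  rcases h3 with h | h | h
  · exact Or.inl (Or.inl (by simpa using hmem 0 h))
  · exact Or.inl (Or.inr (by simpa using hmem 1 h))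
  · exact Or.inr (by simpa using hmem 2 h)

lemma inter_subset_Uo {c : ℝ} : P c 1 ∩ P (c + 1) 1 ⊆ Uo (c + 3 / 4) := by
  rintro x ⟨⟨n, hn1, hn2⟩, ⟨m, hm1, hm2⟩⟩
  have hmn : m = n := by
    have h1 : (m : ℝ) ≤ n := by
      by_contra hgt
      push_neg at hgt
      have : (n : ℝ) + 1 ≤ m := by exact_mod_cast (by exact_mod_cast hgt : n < m)
      linarith
    have h2 : (n : ℝ) ≤ m := by
      by_contra hgt
      push_neg at hgt
      have : (m : ℝ) + 1 ≤ n := by exact_mod_cast (by exact_mod_cast hgt : m < n)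
      linarith
    exact_mod_cast le_antisymm (by exact_mod_cast h1) (by exact_mod_cast h2)
  subst hmn
  have hx : (x : ℝ) = c + 3 * m + 1 := le_antisymm hn2 (by linarith)
  exact ⟨m, by constructor <;> (rw [hx]; linarith)⟩

/-- Disjoint closed sets in the (normal) half-line have disjoint closures in βH. -/
lemma disjoint_closures {A B : Set Hplus} (hA : IsClosed A) (hB : IsClosed B)
    (hd : Disjoint A B) :
    Disjoint (closure (stoneCechUnit '' A)) (closure (stoneCechUnit '' B)) := by
  obtain ⟨f, hf0, hf1, hf01⟩ := exists_continuous_zero_one_of_isClosed hA hB hd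
  set g : Hplus → Icc (0:ℝ) 1 := fun x => ⟨f x, hf01 x⟩ with hg
  have hgc : Continuous g := f.continuous.subtype_mk _
  set G := stoneCechExtend hgc with hG
  have h0 : closure (stoneCechUnit '' A) ⊆ G ⁻¹' {⟨0, by norm_num⟩} := by
    apply closure_minimal _ (isClosed_singleton.preimage (continuous_stoneCechExtend hgc))
    rintro _ ⟨x, hx, rfl⟩
    have hGx : G (stoneCechUnit x) = g x := congrFun (stoneCechExtend_extends hgc) x
    simp only [mem_preimage, mem_singleton_iff]
    rw [← hG, hGx]
    exact Subtype.ext (hf0 hx)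
  have h1 : closure (stoneCechUnit '' B) ⊆ G ⁻¹' {⟨1, by norm_num⟩} := by
    apply closure_minimal _ (isClosed_singleton.preimage (continuous_stoneCechExtend hgc))
    rintro _ ⟨x, hx, rfl⟩
    have hGx : G (stoneCechUnit x) = g x := congrFun (stoneCechExtend_extends hgc) x
    simp only [mem_preimage, mem_singleton_iff]
    rw [← hG, hGx]
    exact Subtype.ext (hf1 hx)
  apply Set.disjoint_left.mpr
  intro p hpA hpB
  have e0 := h0 hpA
  have e1 := h1 hpB
  simp only [mem_preimage, mem_singleton_iff] at e0 e1
  rw [e0] at e1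
  exact absurd (congrArg Subtype.val e1) (by norm_num)

lemma betaShift_mem_closure {S : Set Hplus} {p : StoneCech Hplus}
    (hp : p ∈ closure (stoneCechUnit '' S)) :
    betaShift p ∈ closure (stoneCechUnit '' (shiftMap '' S)) := by
  have h1 : betaShift p ∈ betaShift '' closure (stoneCechUnit '' S) := ⟨p, hp, rfl⟩
  have h2 : betaShift '' closure (stoneCechUnit '' S) ⊆
      closure (betaShift '' (stoneCechUnit '' S)) :=
    image_closure_subset_closure_image (continuous_stoneCechExtend _)
  have h3 : betaShift '' (stoneCechUnit '' S) = stoneCechUnit '' (shiftMap '' S) := by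
    rw [← image_comp, ← image_comp]
    apply image_congr
    intro x _
    exact betaShift_unit x
  rw [h3] at h2
  exact h2 h1

/-- The key case analysis: if `p` is a fixed point of `betaShift` lying in the closure
of (the image of) the color class `P c 1`, we get a contradiction. -/
lemma key_case {c : ℝ} (hc : 0 ≤ c) {p : StoneCech Hplus}
    (hfix : betaShift p = p) (hp : p ∈ closure (stoneCechUnit '' P c 1)) : False := by
  set B := P c 1
  set C := P (c + 1) 1
  set E := P (c + 3 / 4) (1 / 2)
  set U := Uo (c + 3 / 4)
  -- If p lies in the closure of E, immediate contradiction
  have hE_case : p ∈ closure (stoneCechUnit '' E) → False := by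
    intro hpe
    have h1 := betaShift_mem_closure hpe
    rw [hfix] at h1
    have hsub : shiftMap '' E ⊆ P (c + 3 / 4 + 1) (1 / 2) := by
      rintro y ⟨x, hx, rfl⟩
      exact shift_P hx
    have h2 : p ∈ closure (stoneCechUnit '' P (c + 3 / 4 + 1) (1 / 2)) :=
      closure_mono (image_mono hsub) h1
    have hdisj := disjoint_closures (isClosed_P (by linarith) (by norm_num))
      (isClosed_P (by linarith) (by norm_num))
      (P_disjoint (c := c + 3 / 4) (w := 1 / 2) (c' := c + 3 / 4 + 1) (w' := 1 / 2)
        (by linarith) (by linarith) (by linarith))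
    exact Set.disjoint_left.mp hdisj hpe h2
  -- decompositions
  have hBdec : p ∈ closure (stoneCechUnit '' (B ∩ E)) ∪
      closure (stoneCechUnit '' (B \ U)) := by
    rw [← closure_union, ← image_union]
    refine closure_mono (image_mono ?_) hp
    intro x hx
    by_cases hxu : x ∈ U
    · exact Or.inl ⟨hx, Uo_subset_P _ hxu⟩
    · exact Or.inr ⟨hx, hxu⟩
  have hpC : p ∈ closure (stoneCechUnit '' C) := by
    have h1 := betaShift_mem_closure hp
    rw [hfix] at h1
    refine closure_mono (image_mono ?_) h1
    rintro y ⟨x, hx, rfl⟩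
    exact shift_P hx
  have hCdec : p ∈ closure (stoneCechUnit '' (C ∩ E)) ∪
      closure (stoneCechUnit '' (C \ U)) := by
    rw [← closure_union, ← image_union]
    refine closure_mono (image_mono ?_) hpC
    intro x hx
    by_cases hxu : x ∈ U
    · exact Or.inl ⟨hx, Uo_subset_P _ hxu⟩
    · exact Or.inr ⟨hx, hxu⟩
  rcases hBdec with h | hB'
  · exact hE_case (closure_mono (image_mono inter_subset_right) h)
  rcases hCdec with h | hC'
  · exact hE_case (closure_mono (image_mono inter_subset_right) h)
  -- both in closures of B \ U and C \ U, which are disjoint closed sets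
  have hBU : IsClosed (B \ U) := (isClosed_P hc (by norm_num)).sdiff (isOpen_Uo _)
  have hCU : IsClosed (C \ U) := (isClosed_P (by linarith) (by norm_num)).sdiff (isOpen_Uo _)
  have hdisj : Disjoint (B \ U) (C \ U) := by
    rw [Set.disjoint_left]
    rintro x ⟨hxB, hxU⟩ ⟨hxC, -⟩
    exact hxU (inter_subset_Uo ⟨hxB, hxC⟩)
  exact Set.disjoint_left.mp (disjoint_closures hBU hCU hdisj) hB' hC'

theorem betaShift_no_fixed_point (p : StoneCech Hplus) : betaShift p ≠ p := by
  intro hfix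
  have hcov : p ∈ closure (stoneCechUnit '' P 0 1) ∪ closure (stoneCechUnit '' P 1 1) ∪
      closure (stoneCechUnit '' P 2 1) := by
    have h1 : closure (stoneCechUnit '' (P 0 1 ∪ P 1 1 ∪ P 2 1)) = univ := by
      rw [eq_univ_of_forall P_cover, image_univ]
      exact denseRange_stoneCechUnit.closure_range
    have h2 : p ∈ closure (stoneCechUnit '' (P 0 1 ∪ P 1 1 ∪ P 2 1)) := h1.symm ▸ mem_univ p
    rw [image_union, image_union, closure_union, closure_union] at h2
    exact h2
  rcases hcov with (h | h) | h
  · exact key_case le_rfl hfix h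
  · exact key_case (by norm_num) hfix h
  · exact key_case (by norm_num) hfix h

end

/-- The remainder `H*` admits a fixed-point free autohomeomorphism, namely the map `f*`
induced by the translation `x ↦ x + 1`. -/
theorem stmt5 :
    ∃ h : HplusStar ≃ₜ HplusStar,
      (∀ x : HplusStar, h x ≠ x) ∧
      (∀ x : HplusStar, (h x : StoneCech Hplus) = betaShift x) := by
  refine ⟨starHomeo, ?_, fun x => rfl⟩
  intro x hx
  exact betaShift_no_fixed_point (x : StoneCech Hplus) (congrArg Subtype.val hx)
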